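/- Fix an integer k ≥ 1. There exists a constant C_k > 0 (depending only on k) such that for all sufficiently large n, there exist an integer m with m ≤ C_k·n·(log₂ log₂ n)/(log₂ n), a hash function hash₂ : {0,1}^n → {0,1}^m, and a decoding map D : {0,1}^{n−k} × {0,1}^m → {0,1}^n, such that for every s ∈ {0,1}^n and every y ∈ σ_k(s), one has D(y, hash₂(s)) = s. -/

import Mathlib

/-- `Subseq k x` is the set of all subsequences of `x` obtained by deleting exactly `k` symbols,
i.e. all subsequences of `x` of length `|x| - k`. -/
def Subseq {α : Type*} (k : ℕ) (x : List α) : Set (List α) :=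
  {y | y.Sublist x ∧ y.length + k = x.length}

section Greedy

variable {α : Type*} (R : α → α → Prop) [DecidableRel R]

/-- smallest color avoiding colors of `R`-neighbors in `assoc` -/
noncomputable def fresh (v : α) (assoc : List (α × ℕ)) : ℕ :=
  sInf {c | c ∉ (assoc.filter fun p => decide (R v p.1)).map Prod.snd}

theorem fresh_not_mem (v : α) (assoc : List (α × ℕ)) :
    fresh R v assoc ∉ (assoc.filter fun p => decide (R v p.1)).map Prod.snd := by
  have hne : {c | c ∉ (assoc.filter fun p => decide (R v p.1)).map Prod.snd}.Nonempty := by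
    obtain ⟨c, hc⟩ := Infinite.exists_notMem_finset
      ((assoc.filter fun p => decide (R v p.1)).map Prod.snd).toFinset
    exact ⟨c, by simpa [List.mem_toFinset] using hc⟩
  exact Nat.sInf_mem hne

theorem fresh_le (v : α) (assoc : List (α × ℕ)) :
    fresh R v assoc ≤ ((assoc.filter fun p => decide (R v p.1)).map Prod.snd).length := by
  set T := (assoc.filter fun p => decide (R v p.1)).map Prod.snd with hT
  by_contra h
  push_neg at h
  have hsub : Finset.range (T.length + 1) ⊆ T.toFinset := by
    intro c hc
    have hcl : c < fresh R v assoc := lt_of_lt_of_le (Finset.mem_range.1 hc) h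
    have := Nat.notMem_of_lt_sInf hcl
    simp only [Set.mem_setOf_eq, not_not] at this
    exact List.mem_toFinset.2 this
  have h1 := Finset.card_le_card hsub
  rw [Finset.card_range] at h1
  exact absurd (h1.trans T.toFinset_card_le) (by omega)

/-- greedy coloring along a list -/
noncomputable def colMap : List α → List (α × ℕ)
  | [] => []
  | v :: l => (v, fresh R v (colMap l)) :: colMap l

theorem colMap_fst (l : List α) : (colMap R l).map Prod.fst = l := by
  induction l with
  | nil => rfl
  | cons v l ih => simp [colMap, ih]

theorem colMap_mem {l : List α} {v : α} (hv : v ∈ l) : ∃ c, (v, c) ∈ colMap R l := by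
  have : v ∈ (colMap R l).map Prod.fst := by rw [colMap_fst]; exact hv
  obtain ⟨p, hp, hpv⟩ := List.mem_map.1 this
  exact ⟨p.2, by rwa [← hpv, Prod.mk.eta]⟩

theorem colMap_bound : ∀ {l : List α} {v : α} {c : ℕ}, (v, c) ∈ colMap R l →
    c ≤ (l.filter fun w => decide (R v w)).length := by
  intro l
  induction l with
  | nil => intro v c h; simp [colMap] at h
  | cons x l ih =>
    intro v c h
    have hmono : ((l.filter fun w => decide (R v w)).length : ℕ)
        ≤ ((x :: l).filter fun w => decide (R v w)).length :=
      List.Sublist.length_le (List.Sublist.filter _ (List.sublist_cons_self x l))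
    rcases List.mem_cons.1 h with heq | hmem
    · have hv : v = x := congrArg Prod.fst heq
      have hc : c = fresh R x (colMap R l) := congrArg Prod.snd heq
      subst hv; subst hc
      refine le_trans (le_trans (fresh_le R v (colMap R l)) (le_of_eq ?_)) hmono
      rw [List.length_map]
      conv_rhs => rw [← colMap_fst R l]
      rw [List.filter_map, List.length_map]
      rfl
    · exact le_trans (ih hmem) hmono

theorem colMap_valid : ∀ {l : List α}, l.Nodup →
    ∀ {v c w d}, (v, c) ∈ colMap R l → (w, d) ∈ colMap R l →
      v ≠ w → R v w → R w v → c ≠ d := by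
  intro l
  induction l with
  | nil => intro _ v c w d h; simp [colMap] at h
  | cons x l ih =>
    intro hnd v c w d hv hw hne hR hR'
    have hx : x ∉ l := (List.nodup_cons.1 hnd).1
    have hnd' : l.Nodup := (List.nodup_cons.1 hnd).2
    have key : ∀ (a : α) (b e : ℕ), (a, e) ∈ colMap R l → R x a →
        fresh R x (colMap R l) ≠ e := by
      intro a b e hmem hRa heq
      apply fresh_not_mem R x (colMap R l)
      rw [heq]
      exact List.mem_map.2 ⟨(a, e), List.mem_filter.2 ⟨hmem, by simp [hRa]⟩, rfl⟩
    rcases List.mem_cons.1 hv with hv1 | hv2 <;> rcases List.mem_cons.1 hw with hw1 | hw2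
    · exact absurd ((congrArg Prod.fst hv1).trans (congrArg Prod.fst hw1).symm) hne
    · have hvx : v = x := congrArg Prod.fst hv1
      have hcf : c = fresh R x (colMap R l) := congrArg Prod.snd hv1
      subst hvx; rw [hcf]
      exact key w 0 d hw2 hR
    · have hwx : w = x := congrArg Prod.fst hw1
      have hdf : d = fresh R x (colMap R l) := congrArg Prod.snd hw1
      subst hwx; rw [hdf]
      exact fun hcd => key v 0 c hv2 hR' hcd.symm
    · exact ih hnd' hv2 hw2 hne hR hR'

end Greedy


theorem exists_sublist_eraseIdx {α : Type*} :
    ∀ {y t : List α}, y.Sublist t → y.length < t.length →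
      ∃ i, i < t.length ∧ y.Sublist (t.eraseIdx i) := by
  intro y t h
  induction h with
  | slnil => intro h; simp at h
  | cons a h ih =>
    intro _
    exact ⟨0, by simp, by simpa⟩
  | cons_cons a h ih =>
    intro hlt
    simp only [List.length_cons, Nat.succ_lt_succ_iff] at hlt
    obtain ⟨i, hi, hs⟩ := ih hlt
    exact ⟨i + 1, by simpa using hi, by simpa using hs.cons₂ a⟩

theorem insertIdx_get_eraseIdx {α : Type*} :
    ∀ (t : List α) (i : ℕ) (h : i < t.length), (t.eraseIdx i).insertIdx i (t.get ⟨i, h⟩) = t := by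
  intro t
  induction t with
  | nil => intro i h; simp at h
  | cons a t ih =>
    intro i h
    cases i with
    | zero => simp [List.insertIdx]
    | succ i => simpa [List.insertIdx_succ_cons] using ih i (by simpa using h)

theorem exists_erase_chain {α : Type*} :
    ∀ (j : ℕ) (t y : List α), y.Sublist t → y.length + j = t.length →
      ∃ es : List ℕ, es.length = j ∧ (∀ e ∈ es, e < t.length) ∧ es.foldl List.eraseIdx t = y := by
  intro j
  induction j with
  | zero =>
    intro t y hs hl
    exact ⟨[], rfl, by simp, (hs.eq_of_length (by omega)).symm ▸ rfl⟩
  | succ j ih =>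
    intro t y hs hl
    obtain ⟨i, hi, hsub⟩ := exists_sublist_eraseIdx hs (by omega)
    have hlen : (t.eraseIdx i).length + 1 = t.length := List.length_eraseIdx_add_one hi
    obtain ⟨es, hes1, hes2, hes3⟩ := ih (t.eraseIdx i) y hsub (by omega)
    refine ⟨i :: es, by simp [hes1], ?_, by simpa using hes3⟩
    intro e he
    rcases List.mem_cons.1 he with rfl | he2
    · exact hi
    · exact lt_of_lt_of_le (hes2 e he2) (by omega)

theorem exists_insert_chain {α : Type*} :
    ∀ (j : ℕ) (t y : List α), y.Sublist t → y.length + j = t.length →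
      ∃ ds : List (ℕ × α), ds.length = j ∧ (∀ d ∈ ds, d.1 < t.length + 1) ∧
        ds.foldl (fun z d => z.insertIdx d.1 d.2) y = t := by
  intro j
  induction j with
  | zero =>
    intro t y hs hl
    exact ⟨[], rfl, by simp, (hs.eq_of_length (by omega)).symm ▸ rfl⟩
  | succ j ih =>
    intro t y hs hl
    obtain ⟨i, hi, hsub⟩ := exists_sublist_eraseIdx hs (by omega)
    have hlen : (t.eraseIdx i).length + 1 = t.length := List.length_eraseIdx_add_one hi
    obtain ⟨ds, hds1, hds2, hds3⟩ := ih (t.eraseIdx i) y hsub (by omega)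
    refine ⟨ds ++ [(i, t.get ⟨i, hi⟩)], by simp [hds1], ?_, ?_⟩
    · intro d hd
      rcases List.mem_append.1 hd with hd1 | hd2
      · exact lt_of_lt_of_le (hds2 d hd1) (by omega)
      · simp only [List.mem_singleton] at hd2
        rw [hd2]
        exact Nat.lt_succ_of_lt hi
    · rw [List.foldl_append, hds3]
      simpa using insertIdx_get_eraseIdx t i hi


theorem pmap_fin_val (n : ℕ) : ∀ (es : List ℕ) (H : ∀ e ∈ es, e < n),
    (es.pmap (fun e he => (⟨e, he⟩ : Fin n)) H).map Fin.val = es := by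
  intro es
  induction es with
  | nil => intro _; rfl
  | cons e es ih => intro H; simp [List.pmap, ih]

theorem pmap_pair_val {β : Type*} (n : ℕ) : ∀ (ds : List (ℕ × β)) (H : ∀ d ∈ ds, d.1 < n),
    (ds.pmap (fun d hd => ((⟨d.1, hd⟩ : Fin n), d.2)) H).map (fun p => (p.1.val, p.2)) = ds := by
  intro ds
  induction ds with
  | nil => intro _; rfl
  | cons d ds ih => intro H; simp [List.pmap, ih]

theorem neighbor_count (k n : ℕ) (s : List Bool) (hs : s.length = n)
    (l : List (List.Vector Bool n)) (hl : l.Nodup) (P : List.Vector Bool n → Bool)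
    (hP : ∀ t, P t = true → ∃ y : List Bool, y.Sublist s ∧ y.Sublist t.1 ∧ y.length + k = n) :
    (l.filter P).length ≤ n ^ k * (2 * (n + 1)) ^ k := by
  classical
  set γ := List.Vector (Fin n) k × List.Vector (Fin (n + 1) × Bool) k with hγ
  set decodeList : γ → List Bool := fun c =>
    c.2.toList.foldl (fun z d => z.insertIdx d.1.val d.2)
      (c.1.toList.foldl (fun z e => z.eraseIdx e.val) s) with hdecodeList
  set decode : γ → List.Vector Bool n := fun c =>
    if h : (decodeList c).length = n then ⟨decodeList c, h⟩
    else ⟨List.replicate n false, by simp⟩ with hdecode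
  have hnodup : (l.filter P).Nodup := hl.filter P
  rw [← List.toFinset_card_of_nodup hnodup]
  have hsurj : Set.SurjOn decode (↑(Finset.univ : Finset γ)) (↑(l.filter P).toFinset) := by
    intro t ht
    simp only [Finset.coe_sort_coe, List.coe_toFinset, Set.mem_setOf_eq] at ht
    have hPt : P t = true := (List.mem_filter.1 ht).2
    obtain ⟨y, hys, hyt, hyl⟩ := hP t hPt
    obtain ⟨es, hes1, hes2, hes3⟩ := exists_erase_chain k s y hys (by omega)
    obtain ⟨ds, hds1, hds2, hds3⟩ := exists_insert_chain k t.1 y hyt (by rw [t.2]; omega)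
    have hes2' : ∀ e ∈ es, e < n := by intro e he; have := hes2 e he; omega
    have hds2' : ∀ d ∈ ds, d.1 < n + 1 := by
      intro d hd; have := hds2 d hd; rw [t.2] at this; omega
    refine ⟨(⟨es.pmap (fun e he => (⟨e, he⟩ : Fin n)) hes2', by simp [hes1]⟩,
            ⟨ds.pmap (fun d hd => ((⟨d.1, hd⟩ : Fin (n + 1)), d.2)) hds2', by simp [hds1]⟩),
      by simp, ?_⟩
    have hkey : decodeList (⟨es.pmap (fun e he => (⟨e, he⟩ : Fin n)) hes2', by simp [hes1]⟩,
            ⟨ds.pmap (fun d hd => ((⟨d.1, hd⟩ : Fin (n + 1)), d.2)) hds2', by simp [hds1]⟩) = t.1 := by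
      simp only [hdecodeList, List.Vector.toList]
      have h1 : (es.pmap (fun e he => (⟨e, he⟩ : Fin n)) hes2').foldl
          (fun z e => z.eraseIdx e.val) s = y := by
        rw [← hes3]
        conv_rhs => rw [← pmap_fin_val n es hes2']
        rw [List.foldl_map]
      have h2 : (ds.pmap (fun d hd => ((⟨d.1, hd⟩ : Fin (n + 1)), d.2)) hds2').foldl
          (fun z d => z.insertIdx d.1.val d.2) y = t.1 := by
        rw [← hds3]
        conv_rhs => rw [← pmap_pair_val (n + 1) ds hds2']
        rw [List.foldl_map]
      rw [h1, h2]
    rw [hdecode]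
    simp only
    split_ifs with hh
    swap
    · have := t.2; rw [← hkey] at this; exact (hh this).elim
    exact Subtype.ext ((congrArg Subtype.val (dif_pos hh)).trans hkey)
  have hcard := Finset.card_le_card_of_surjOn decode hsurj
  calc (l.filter P).toFinset.card ≤ (Finset.univ : Finset γ).card := hcard
    _ = n ^ k * (2 * (n + 1)) ^ k := by
        rw [Finset.card_univ]
        show Fintype.card (List.Vector (Fin n) k × List.Vector (Fin (n + 1) × Bool) k) = _
        rw [Fintype.card_prod, card_vector, card_vector,
          Fintype.card_fin, Fintype.card_prod, Fintype.card_fin, Fintype.card_bool]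
        ring

theorem stmt_7 (k : ℕ) (hk : 1 ≤ k) :
    ∃ C : ℝ, 0 < C ∧ ∃ n₀ : ℕ, ∀ n : ℕ, n₀ ≤ n →
      ∃ m : ℕ, (m : ℝ) ≤ C * (n : ℝ) * Real.logb 2 (Real.logb 2 n) / Real.logb 2 n ∧
        ∃ (hash₂ : List Bool → List Bool) (D : List Bool → List Bool → List Bool),
          (∀ s : List Bool, s.length = n → (hash₂ s).length = m) ∧
          (∀ s : List Bool, s.length = n → ∀ y ∈ Subseq k s, D y (hash₂ s) = s) := by
  classical
  refine ⟨128 * k, by positivity, 16 + k, fun n hn => ?_⟩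
  have hn16 : 16 ≤ n := by omega
  set M := n ^ k * (2 * (n + 1)) ^ k with hM
  set m := Nat.size M with hm
  have hnR : (16 : ℝ) ≤ (n : ℝ) := by exact_mod_cast hn16
  have hnpos : (0 : ℝ) < n := by linarith
  set L := Real.logb 2 (n : ℝ) with hL
  -- basic facts about L
  have h2four : ((2 : ℝ) ^ (4 : ℕ)) = 16 := by norm_num
  have hlogb_pow : ∀ j : ℕ, Real.logb 2 ((2 : ℝ) ^ j) = j := by
    intro j
    rw [Real.logb_pow, Real.logb_self_eq_one (by norm_num : (1:ℝ) < 2)]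
    ring
  have hL4 : 4 ≤ L := by
    have := Real.logb_le_logb_of_le (one_lt_two) (by norm_num : (0:ℝ) < 16) hnR
    rw [← h2four, hlogb_pow 4] at this
    exact_mod_cast this
  have hL0 : 0 < L := by linarith
  have hlogn : Real.log (n : ℝ) ≤ 2 * Real.sqrt n := by
    have h1 : Real.log (Real.sqrt n) ≤ Real.sqrt n - 1 :=
      Real.log_le_sub_one_of_pos (Real.sqrt_pos.2 hnpos)
    have h2 : Real.log (Real.sqrt n) = Real.log n / 2 := Real.log_sqrt hnpos.le
    nlinarith [Real.sqrt_nonneg (n : ℝ)]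
  have hlog2 : (0.6931471803 : ℝ) < Real.log 2 := Real.log_two_gt_d9
  have hlogn0 : 0 ≤ Real.log (n : ℝ) := Real.log_nonneg (by linarith)
  have hsqrt : L ≤ 4 * Real.sqrt n := by
    have hLdef : L = Real.log n / Real.log 2 := rfl
    rw [hLdef, div_le_iff₀ (by linarith)]
    nlinarith [Real.sqrt_nonneg (n : ℝ)]
  have hLsq : L ^ 2 ≤ 16 * n := by
    nlinarith [Real.sq_sqrt hnpos.le, Real.sqrt_nonneg (n : ℝ)]
  have hLL : 1 ≤ Real.logb 2 L := by
    have := Real.logb_le_logb_of_le (one_lt_two) (by norm_num : (0:ℝ) < 2) (by linarith : (2:ℝ) ≤ L)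
    rwa [Real.logb_self_eq_one (by norm_num : (1:ℝ) < 2)] at this
  -- size bounds
  have hszpos : 0 < Nat.size n := Nat.size_pos.2 (by omega)
  set sz := Nat.size n with hsz
  have hm1 : m ≤ sz * k + (sz + 1) * k := by
    rw [hm]
    apply Nat.size_le.2
    calc M ≤ n ^ k * ((2 : ℕ) ^ (sz + 1)) ^ k := by
            apply Nat.mul_le_mul_left
            apply Nat.pow_le_pow_left
            have := Nat.lt_size_self n
            rw [← hsz] at this
            rw [pow_succ]
            omega
      _ < (2 ^ sz) ^ k * (2 ^ (sz + 1)) ^ k := by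
            apply Nat.mul_lt_mul_of_lt_of_le
            · exact Nat.pow_lt_pow_left (Nat.lt_size_self n) (by omega)
            · exact le_refl _
            · positivity
      _ = 2 ^ (sz * k + (sz + 1) * k) := by rw [← pow_mul, ← pow_mul, ← pow_add]
  have hs_real : (sz : ℝ) ≤ L + 1 := by
    have h2 : 2 ^ (sz - 1) ≤ n := Nat.lt_size.1 (by omega)
    have h2' : ((2 : ℝ) ^ (sz - 1 : ℕ)) ≤ (n : ℝ) := by exact_mod_cast h2
    have h3 := Real.logb_le_logb_of_le (one_lt_two) (by positivity) h2'
    rw [hlogb_pow (sz - 1)] at h3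
    have h4 : ((sz - 1 : ℕ) : ℝ) = (sz : ℝ) - 1 := by
      have : 1 ≤ sz := hszpos
      push_cast [Nat.cast_sub this]
      ring
    rw [h4] at h3
    linarith
  have hkR : (1 : ℝ) ≤ (k : ℝ) := by exact_mod_cast hk
  have hmL : (m : ℝ) ≤ 6 * k * L := by
    have hc : (m : ℝ) ≤ (sz : ℝ) * k + ((sz : ℝ) + 1) * k := by exact_mod_cast hm1
    nlinarith [hs_real, hL4, hkR]
  refine ⟨m, ?_, ?_⟩
  · rw [le_div_iff₀ hL0]
    calc (m : ℝ) * L ≤ (6 * k * L) * L := mul_le_mul_of_nonneg_right hmL hL0.le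
      _ = 6 * (k : ℝ) * L ^ 2 := by ring
      _ ≤ 6 * (k : ℝ) * (16 * n) := by
          apply mul_le_mul_of_nonneg_left hLsq (by positivity)
      _ ≤ 128 * k * n * Real.logb 2 L := by
          nlinarith [mul_le_mul_of_nonneg_left hLL
            (by positivity : (0 : ℝ) ≤ 128 * (k : ℝ) * n)]
  · -- the construction
    set V := List.Vector Bool n with hV
    set Rel : V → V → Prop := fun v w =>
      ∃ y : List Bool, y.Sublist v.1 ∧ y.Sublist w.1 ∧ y.length + k = n with hRel
    set l := (Finset.univ : Finset V).toList with hl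
    have hmem : ∀ v : V, v ∈ l := fun v => Finset.mem_toList.2 (Finset.mem_univ v)
    set col : V → ℕ := fun v => (colMap_mem Rel (hmem v)).choose with hcol
    have hcolmem : ∀ v : V, (v, col v) ∈ colMap Rel l :=
      fun v => (colMap_mem Rel (hmem v)).choose_spec
    have hvalid : ∀ v w : V, v ≠ w → Rel v w → Rel w v → col v ≠ col w := fun v w hne h h' =>
      colMap_valid Rel (Finset.nodup_toList _) (hcolmem v) (hcolmem w) hne h h'
    have hbound : ∀ v : V, col v ≤ M := by
      intro v
      refine le_trans (colMap_bound Rel (hcolmem v)) ?_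
      exact neighbor_count k n v.1 v.2 l (Finset.nodup_toList _) _
        (fun t ht => of_decide_eq_true ht)
    have hcollt : ∀ v : V, col v < 2 ^ m :=
      fun v => lt_of_le_of_lt (hbound v) (Nat.lt_size_self M)
    set encode : ℕ → List Bool := fun c => List.ofFn (fun i : Fin m => c.testBit i.val)
      with hencode
    have hencinj : ∀ c₁ c₂ : ℕ, c₁ < 2 ^ m → c₂ < 2 ^ m → encode c₁ = encode c₂ → c₁ = c₂ := by
      intro c₁ c₂ h1 h2 he
      apply Nat.eq_of_testBit_eq
      intro i
      by_cases hi : i < m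
      · have := congrFun (List.ofFn_injective he) ⟨i, hi⟩
        exact this
      · rw [Nat.testBit_eq_false_of_lt
          (lt_of_lt_of_le h1 (Nat.pow_le_pow_right (by norm_num) (le_of_not_gt hi))),
          Nat.testBit_eq_false_of_lt
          (lt_of_lt_of_le h2 (Nat.pow_le_pow_right (by norm_num) (le_of_not_gt hi)))]
    set hash₂ : List Bool → List Bool := fun s =>
      if h : s.length = n then encode (col ⟨s, h⟩) else List.replicate m false with hhash
    refine ⟨hash₂, fun y h => Classical.epsilon
      (fun s => s.length = n ∧ y.Sublist s ∧ y.length + k = n ∧ hash₂ s = h), ?_, ?_⟩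
    · intro s hs
      rw [hhash]
      simp only
      rw [dif_pos hs, hencode]
      simp
    · intro s hs y hy
      obtain ⟨hsub, hlen⟩ := hy
      rw [hs] at hlen
      show Classical.epsilon
        (fun s' => s'.length = n ∧ y.Sublist s' ∧ y.length + k = n ∧ hash₂ s' = hash₂ s) = s
      have hex : ∃ s' : List Bool,
          s'.length = n ∧ y.Sublist s' ∧ y.length + k = n ∧ hash₂ s' = hash₂ s :=
        ⟨s, hs, hsub, hlen, rfl⟩
      set t := Classical.epsilon
        (fun s' => s'.length = n ∧ y.Sublist s' ∧ y.length + k = n ∧ hash₂ s' = hash₂ s) with ht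
      obtain ⟨h1, h2, h3, h4⟩ := Classical.epsilon_spec hex
      by_contra hne
      have hne2 : (⟨t, h1⟩ : V) ≠ (⟨s, hs⟩ : V) := fun hEq => hne (congrArg Subtype.val hEq)
      apply hvalid ⟨t, h1⟩ ⟨s, hs⟩ hne2 ⟨y, h2, hsub, h3⟩ ⟨y, hsub, h2, h3⟩
      apply hencinj _ _ (hcollt _) (hcollt _)
      have e1 : hash₂ t = encode (col ⟨t, h1⟩) := by rw [hhash]; simp only; rw [dif_pos h1]
      have e2 : hash₂ s = encode (col ⟨s, hs⟩) := by rw [hhash]; simp only; rw [dif_pos hs]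
      rw [← e1, ← e2]
      exact h4
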